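/- Let s ≥ 1, let Z_i = (X_i, Y_i), i = 1,...,s, be i.i.d. random pairs with Y_i integrable, and let ξ be a random variable independent of (Z_1,...,Z_s). Let S_1, ..., S_s be measurable functions of (ξ, X_1, ..., X_s) only (honesty: the weights do not depend on the responses), with |S_i| ≤ 1 almost surely, and set T = Σ_{i=1}^s S_i Y_i. Then, almost surely, E[T | X_1, Y_1] − E[T | X_1] = E[S_1 | X_1] · ( Y_1 − E[Y_1 | X_1] ). -/

import Mathlib

open MeasureTheory ProbabilityTheory Finset

lemma condexp_freeze {Ω β γ : Type*} [MeasurableSpace Ω] [MeasurableSpace β] [MeasurableSpace γ]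
    (μ : Measure Ω) [IsProbabilityMeasure μ]
    (V : Ω → β) (W : Ω → γ) (hV : Measurable V) (hW : Measurable W)
    (hind : IndepFun V W μ) (f : β × γ → ℝ) (hf : Measurable f)
    (hint : Integrable (fun ω => f (V ω, W ω)) μ) :
    (μ[(fun ω => f (V ω, W ω)) | MeasurableSpace.comap V inferInstance])
      =ᵐ[μ] fun ω => ∫ w, f (V ω, w) ∂(μ.map W) := by
  have hVW : Measurable (fun ω => (V ω, W ω)) := hV.prodMk hW
  haveI : IsProbabilityMeasure (μ.map V) := Measure.isProbabilityMeasure_map hV.aemeasurable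
  haveI : IsProbabilityMeasure (μ.map W) := Measure.isProbabilityMeasure_map hW.aemeasurable
  have hmap : μ.map (fun ω => (V ω, W ω)) = (μ.map V).prod (μ.map W) :=
    (indepFun_iff_map_prod_eq_prod_map_map hV.aemeasurable hW.aemeasurable).mp hind
  have hfprod : Integrable f ((μ.map V).prod (μ.map W)) := by
    rw [← hmap, integrable_map_measure hf.aestronglyMeasurable hVW.aemeasurable]
    exact hint
  set φ : β → ℝ := fun v => ∫ w, f (v, w) ∂(μ.map W) with hφdef
  have hφsm : StronglyMeasurable φ := hf.stronglyMeasurable.integral_prod_right'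
  have hφint : Integrable φ (μ.map V) := hfprod.integral_prod_left
  have hVm : Measurable[MeasurableSpace.comap V inferInstance] V := fun t ht => ⟨t, ht, rfl⟩
  have hgm : StronglyMeasurable[MeasurableSpace.comap V inferInstance] (fun ω => φ (V ω)) :=
    (hφsm.measurable.comp hVm).stronglyMeasurable
  have hgint : Integrable (fun ω => φ (V ω)) μ := by
    have := (integrable_map_measure hφsm.aestronglyMeasurable hV.aemeasurable).mp hφint
    exact this
  refine (ae_eq_condExp_of_forall_setIntegral_eq hV.comap_le hint
    (fun s _ _ => hgint.integrableOn) ?_ hgm.aestronglyMeasurable).symm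
  rintro _ ⟨t, ht, rfl⟩ -
  have h1 : ∫ x in V ⁻¹' t, φ (V x) ∂μ = ∫ v in t, φ v ∂(μ.map V) :=
    (setIntegral_map ht hφsm.aestronglyMeasurable hV.aemeasurable).symm
  have hpre : V ⁻¹' t = (fun ω => (V ω, W ω)) ⁻¹' (t ×ˢ Set.univ) := by
    ext ω; simp
  have h2 : ∫ x in V ⁻¹' t, f (V x, W x) ∂μ
      = ∫ p in t ×ˢ Set.univ, f p ∂((μ.map V).prod (μ.map W)) := by
    rw [← hmap, hpre, ← setIntegral_map (ht.prod MeasurableSet.univ)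
      hf.aestronglyMeasurable hVW.aemeasurable]
  rw [h1, h2, setIntegral_prod _ hfprod.integrableOn]
  simp only [Measure.restrict_univ]
  rfl

lemma honesty_indep_aux {Ω E' Ξ : Type*} [MeasurableSpace Ω] [MeasurableSpace E']
    [MeasurableSpace Ξ] [Nonempty E'] [Nonempty Ξ]
    (μ : Measure Ω) [IsProbabilityMeasure μ] {s : ℕ}
    (Z : Fin s → Ω → E') (hZmeas : ∀ i, Measurable (Z i))
    (hindep : iIndepFun Z μ)
    (ξ : Ω → Ξ) (hξmeas : Measurable ξ)
    (hξindep : IndepFun ξ (fun ω => fun i => Z i ω) μ) (i0 : Fin s) :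
    IndepFun (Z i0) (fun ω => (ξ ω, fun j : {j : Fin s // j ≠ i0} => Z (j : Fin s) ω)) μ := by
  classical
  obtain ⟨e₀⟩ := ‹Nonempty E'›
  obtain ⟨x₀⟩ := ‹Nonempty Ξ›
  let g : Option (Fin s) → Ω → Ξ ⊕ E' := fun o => match o with
    | none => fun ω => Sum.inl (ξ ω)
    | some i => fun ω => Sum.inr (Z i ω)
  have hgmeas : ∀ o, Measurable (g o) := by
    intro o
    cases o with
    | none => exact measurable_inl.comp hξmeas
    | some i => exact measurable_inr.comp (hZmeas i)
  have hOpt : iIndepFun g μ := by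
    rw [iIndepFun_iff_measure_inter_preimage_eq_mul]
    intro S sets hsets
    have hBmeas : ∀ j ∈ S.eraseNone, MeasurableSet (Sum.inr ⁻¹' sets (some j) : Set E') :=
      fun j hj => measurable_inr (hsets _ (Finset.mem_eraseNone.mp hj))
    have hZprod : μ (⋂ j ∈ S.eraseNone, Z j ⁻¹' (Sum.inr ⁻¹' sets (some j)))
        = ∏ j ∈ S.eraseNone, μ (Z j ⁻¹' (Sum.inr ⁻¹' sets (some j))) :=
      hindep.measure_inter_preimage_eq_mul _ hBmeas
    by_cases hn : none ∈ S
    · have hsplit : (⋂ i ∈ S, g i ⁻¹' sets i)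
          = (ξ ⁻¹' (Sum.inl ⁻¹' sets none)) ∩ ((fun ω => fun i => Z i ω) ⁻¹'
              (⋂ j ∈ S.eraseNone,
                (fun z : Fin s → E' => z j) ⁻¹' (Sum.inr ⁻¹' sets (some j)))) := by
        ext ω
        simp only [Set.mem_iInter, Set.mem_inter_iff, Set.mem_preimage, Finset.mem_eraseNone]
        constructor
        · intro h
          exact ⟨h none hn, fun j hj => h (some j) hj⟩
        · rintro ⟨h0, h⟩ i hi
          cases i with
          | none => exact h0
          | some j => exact h j hi
      have hCmeas : MeasurableSet
          (⋂ j ∈ S.eraseNone,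
            (fun z : Fin s → E' => z j) ⁻¹' (Sum.inr ⁻¹' sets (some j))) :=
        Finset.measurableSet_biInter _
          (fun j hj => measurable_pi_apply j (hBmeas j hj))
      have hxi := hξindep.measure_inter_preimage_eq_mul _ _
        (measurable_inl (hsets none hn)) hCmeas
      have hpre : (fun ω => fun i => Z i ω) ⁻¹'
            (⋂ j ∈ S.eraseNone,
              (fun z : Fin s → E' => z j) ⁻¹' (Sum.inr ⁻¹' sets (some j)))
          = ⋂ j ∈ S.eraseNone, Z j ⁻¹' (Sum.inr ⁻¹' sets (some j)) := by
        ext ω; simp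
      rw [hsplit, hxi, hpre, hZprod, ← Finset.mul_prod_erase S _ hn,
        ← Finset.map_some_eraseNone S, Finset.prod_map]
      rfl
    · have hS : S.eraseNone.map Function.Embedding.some = S := by
        rw [Finset.map_some_eraseNone, Finset.erase_eq_of_notMem hn]
      have hsplit : (⋂ i ∈ S, g i ⁻¹' sets i)
          = ⋂ j ∈ S.eraseNone, Z j ⁻¹' (Sum.inr ⁻¹' sets (some j)) := by
        ext ω
        simp only [Set.mem_iInter, Set.mem_preimage, Finset.mem_eraseNone]
        constructor
        · intro h j hj
          exact h (some j) hj
        · intro h i hi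
          cases i with
          | none => exact absurd hi hn
          | some j => exact h j hi
      rw [hsplit, hZprod]
      conv_rhs => rw [← hS, Finset.prod_map]
      simp only [Function.Embedding.some_apply]
      rfl
  have hdisj : Disjoint ({some i0} : Finset (Option (Fin s)))
      (Finset.insertNone (Finset.univ.erase i0)) := by
    simp [Finset.disjoint_singleton_left]
  have hpair := hOpt.indepFun_finset {some i0} (Finset.insertNone (Finset.univ.erase i0))
    hdisj hgmeas
  have hmemL : (some i0) ∈ ({some i0} : Finset (Option (Fin s))) := Finset.mem_singleton_self _
  have hmemN : (none : Option (Fin s)) ∈ Finset.insertNone (Finset.univ.erase i0) :=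
    Finset.none_mem_insertNone
  have hmemS : ∀ j : {j : Fin s // j ≠ i0},
      (some (j : Fin s)) ∈ Finset.insertNone (Finset.univ.erase i0) := by
    intro j
    simp [j.2]
  let φL : (({some i0} : Finset (Option (Fin s))) → Ξ ⊕ E') → E' :=
    fun v => Sum.elim (fun _ => e₀) id (v ⟨some i0, hmemL⟩)
  let φR : ((Finset.insertNone (Finset.univ.erase i0) : Finset (Option (Fin s))) → Ξ ⊕ E')
      → Ξ × ({j : Fin s // j ≠ i0} → E') :=
    fun v => (Sum.elim id (fun _ => x₀) (v ⟨none, hmemN⟩),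
      fun j => Sum.elim (fun _ => e₀) id (v ⟨some (j : Fin s), hmemS j⟩))
  have hφL : Measurable φL :=
    (measurable_const.sumElim measurable_id).comp (measurable_pi_apply _)
  have hφR : Measurable φR :=
    ((measurable_id.sumElim measurable_const).comp (measurable_pi_apply _)).prodMk
      (measurable_pi_lambda _ fun j =>
        (measurable_const.sumElim measurable_id).comp (measurable_pi_apply _))
  exact hpair.comp hφL hφR

noncomputable def trunc (r : ℝ) : ℝ := max (-1) (min 1 r)

lemma measurable_trunc : Measurable trunc :=
  measurable_const.max (measurable_const.min measurable_id)

lemma abs_trunc_le (r : ℝ) : |trunc r| ≤ 1 :=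
  abs_le.2 ⟨le_max_left _ _, max_le (by norm_num) (min_le_left _ _)⟩

lemma trunc_eq {r : ℝ} (h : |r| ≤ 1) : trunc r = r := by
  rcases abs_le.1 h with ⟨h1, h2⟩
  unfold trunc
  rw [min_eq_right h2, max_eq_right h1]

section HonestyAux

variable {E Ξ : Type*} [MeasurableSpace E] [MeasurableSpace Ξ] {s : ℕ}

def honXup (i0 : Fin s) (x : E) (w : Ξ × ({j : Fin s // j ≠ i0} → E × ℝ)) : Fin s → E :=
  fun j => if h : j = i0 then x else (w.2 ⟨j, h⟩).1

lemma measurable_honXup (i0 : Fin s) :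
    Measurable (fun p : E × (Ξ × ({j : Fin s // j ≠ i0} → E × ℝ)) => honXup i0 p.1 p.2) := by
  apply measurable_pi_lambda
  intro j
  by_cases h : j = i0
  · simp only [honXup, dif_pos h]
    exact measurable_fst
  · simp only [honXup, dif_neg h]
    exact measurable_fst.comp ((measurable_pi_apply _).comp (measurable_snd.comp measurable_snd))

noncomputable def honQ (σf : Fin s → Ξ × (Fin s → E) → ℝ) (i0 : Fin s) (x : E)
    (w : Ξ × ({j : Fin s // j ≠ i0} → E × ℝ)) : ℝ :=
  trunc (σf i0 (w.1, honXup i0 x w))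

lemma measurable_honQ (σf : Fin s → Ξ × (Fin s → E) → ℝ) (i0 : Fin s)
    (hσf : Measurable (σf i0)) :
    Measurable (fun p : E × (Ξ × ({j : Fin s // j ≠ i0} → E × ℝ)) => honQ σf i0 p.1 p.2) :=
  measurable_trunc.comp (hσf.comp
    ((measurable_fst.comp measurable_snd).prodMk (measurable_honXup i0)))

lemma abs_honQ_le (σf : Fin s → Ξ × (Fin s → E) → ℝ) (i0 : Fin s) (x : E)
    (w : Ξ × ({j : Fin s // j ≠ i0} → E × ℝ)) : |honQ σf i0 x w| ≤ 1 :=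
  abs_trunc_le _

noncomputable def honH (σf : Fin s → Ξ × (Fin s → E) → ℝ) (i0 : Fin s) (x : E)
    (w : Ξ × ({j : Fin s // j ≠ i0} → E × ℝ)) : ℝ :=
  ∑ i, trunc (σf i (w.1, honXup i0 x w)) *
    (if h : i = i0 then 0 else (w.2 ⟨i, h⟩).2)

lemma measurable_honH (σf : Fin s → Ξ × (Fin s → E) → ℝ) (i0 : Fin s)
    (hσf : ∀ i, Measurable (σf i)) :
    Measurable (fun p : E × (Ξ × ({j : Fin s // j ≠ i0} → E × ℝ)) => honH σf i0 p.1 p.2) := by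
  apply Finset.measurable_sum
  intro i _
  apply Measurable.mul
  · exact measurable_trunc.comp ((hσf i).comp
      ((measurable_fst.comp measurable_snd).prodMk (measurable_honXup i0)))
  · by_cases h : i = i0
    · simp only [dif_pos h]
      exact measurable_const
    · simp only [dif_neg h]
      exact measurable_snd.comp ((measurable_pi_apply _).comp
        (measurable_snd.comp measurable_snd))

noncomputable def honF (σf : Fin s → Ξ × (Fin s → E) → ℝ) (i0 : Fin s) (x : E) (y : ℝ)
    (w : Ξ × ({j : Fin s // j ≠ i0} → E × ℝ)) : ℝ :=
  ∑ i, trunc (σf i (w.1, honXup i0 x w)) *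
    (if h : i = i0 then y else (w.2 ⟨i, h⟩).2)

lemma measurable_honF (σf : Fin s → Ξ × (Fin s → E) → ℝ) (i0 : Fin s)
    (hσf : ∀ i, Measurable (σf i)) :
    Measurable (fun p : (E × ℝ) × (Ξ × ({j : Fin s // j ≠ i0} → E × ℝ)) =>
      honF σf i0 p.1.1 p.1.2 p.2) := by
  apply Finset.measurable_sum
  intro i _
  apply Measurable.mul
  · refine measurable_trunc.comp ((hσf i).comp
      ((measurable_fst.comp measurable_snd).prodMk ?_))
    exact (measurable_honXup i0).comp
      (((measurable_fst.comp measurable_fst)).prodMk measurable_snd)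
  · by_cases h : i = i0
    · simp only [dif_pos h]
      exact measurable_snd.comp measurable_fst
    · simp only [dif_neg h]
      exact measurable_snd.comp ((measurable_pi_apply _).comp
        (measurable_snd.comp measurable_snd))

lemma honF_split (σf : Fin s → Ξ × (Fin s → E) → ℝ) (i0 : Fin s) (x : E) (y : ℝ)
    (w : Ξ × ({j : Fin s // j ≠ i0} → E × ℝ)) :
    honF σf i0 x y w = honQ σf i0 x w * y + honH σf i0 x w := by
  classical
  unfold honF honH honQ
  rw [← Finset.add_sum_erase _ _ (Finset.mem_univ i0),
    ← Finset.add_sum_erase _ _ (Finset.mem_univ i0), dif_pos rfl, dif_pos rfl]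
  have hcong : ∀ i ∈ Finset.univ.erase i0,
      trunc (σf i (w.1, honXup i0 x w)) *
        (if h : i = i0 then y else (w.2 ⟨i, h⟩).2)
      = trunc (σf i (w.1, honXup i0 x w)) *
        (if h : i = i0 then 0 else (w.2 ⟨i, h⟩).2) := by
    intro i hi
    rw [dif_neg (Finset.ne_of_mem_erase hi), dif_neg (Finset.ne_of_mem_erase hi)]
  rw [Finset.sum_congr rfl hcong]
  ring

lemma abs_honH_le (σf : Fin s → Ξ × (Fin s → E) → ℝ) (i0 : Fin s) (x : E)
    (w : Ξ × ({j : Fin s // j ≠ i0} → E × ℝ)) :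
    |honH σf i0 x w| ≤ ∑ i, |if h : i = i0 then (0 : ℝ) else (w.2 ⟨i, h⟩).2| := by
  refine (Finset.abs_sum_le_sum_abs _ _).trans ?_
  refine Finset.sum_le_sum fun i _ => ?_
  rw [abs_mul]
  calc |trunc (σf i (w.1, honXup i0 x w))| * |if h : i = i0 then (0:ℝ) else (w.2 ⟨i, h⟩).2|
      ≤ 1 * |if h : i = i0 then (0:ℝ) else (w.2 ⟨i, h⟩).2| :=
        mul_le_mul_of_nonneg_right (abs_trunc_le _) (abs_nonneg _)
    _ = _ := one_mul _

end HonestyAux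

set_option maxHeartbeats 1000000 in
/-- (Honesty decomposition.) If `T = Σ_i S_i Y_i` where the weights
`S_i` are measurable functions of independent auxiliary randomness `ξ` and the features
`X_1, ..., X_s` only, with `|S_i| ≤ 1` a.s., then almost surely
`E[T | X_1, Y_1] − E[T | X_1] = E[S_1 | X_1]·(Y_1 − E[Y_1 | X_1])`. -/
theorem honesty_decomposition
    {Ω : Type*} [MeasurableSpace Ω]
    {E : Type*} [MeasurableSpace E] {Ξ : Type*} [MeasurableSpace Ξ]
    (μ : Measure Ω) [IsProbabilityMeasure μ]
    (s : ℕ) (hs : 1 ≤ s)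
    (X : Fin s → Ω → E) (Y : Fin s → Ω → ℝ)
    (Z : Fin s → Ω → E × ℝ) (hZ : Z = fun i ω => (X i ω, Y i ω))
    (hZmeas : ∀ i, Measurable (Z i))
    (hindep : iIndepFun Z μ)
    (i0 : Fin s) (hi0 : (i0 : ℕ) = 0)
    (hident : ∀ i, IdentDistrib (Z i) (Z i0) μ μ)
    (hYint : ∀ i, Integrable (Y i) μ)
    (ξ : Ω → Ξ) (hξmeas : Measurable ξ)
    (hξindep : IndepFun ξ (fun ω => fun i => Z i ω) μ)
    (σf : Fin s → Ξ × (Fin s → E) → ℝ) (hσfmeas : ∀ i, Measurable (σf i))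
    (St : Fin s → Ω → ℝ) (hSt : St = fun i ω => σf i (ξ ω, fun j => X j ω))
    (hSbd : ∀ i, ∀ᵐ ω ∂μ, |St i ω| ≤ 1)
    (T : Ω → ℝ) (hT : T = fun ω => ∑ i, St i ω * Y i ω) :
    (fun ω => (μ[T | MeasurableSpace.comap (Z i0) inferInstance]) ω
        - (μ[T | MeasurableSpace.comap (X i0) inferInstance]) ω)
      =ᵐ[μ] fun ω => (μ[St i0 | MeasurableSpace.comap (X i0) inferInstance]) ω *
        (Y i0 ω - (μ[Y i0 | MeasurableSpace.comap (X i0) inferInstance]) ω) := by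
  classical
  -- nonemptiness
  have hΩne : Nonempty Ω := by
    by_contra h
    rw [not_nonempty_iff] at h
    have h1 : μ Set.univ = 1 := measure_univ
    rw [Set.univ_eq_empty_iff.mpr h, measure_empty] at h1
    exact zero_ne_one h1
  obtain ⟨ω₀⟩ := hΩne
  haveI : Nonempty E := ⟨X i0 ω₀⟩
  haveI : Nonempty Ξ := ⟨ξ ω₀⟩
  -- basic measurability
  have hXmeas : ∀ i, Measurable (X i) := fun i => by
    have h := hZmeas i; rw [hZ] at h; exact measurable_fst.comp h
  have hYmeas : ∀ i, Measurable (Y i) := fun i => by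
    have h := hZmeas i; rw [hZ] at h; exact measurable_snd.comp h
  have hStmeas : ∀ i, Measurable (St i) := fun i => by
    rw [hSt]
    exact (hσfmeas i).comp (hξmeas.prodMk (measurable_pi_lambda _ fun j => hXmeas j))
  have hzall : ∀ (i : Fin s) (ω : Ω), Z i ω = (X i ω, Y i ω) := fun i ω => by rw [hZ]
  -- the σ-algebras
  have hmZle : MeasurableSpace.comap (Z i0) inferInstance ≤ ‹MeasurableSpace Ω› :=
    (hZmeas i0).comap_le
  have hmXle : MeasurableSpace.comap (X i0) inferInstance ≤ ‹MeasurableSpace Ω› :=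
    (hXmeas i0).comap_le
  have hmXZ : MeasurableSpace.comap (X i0) inferInstance
      ≤ MeasurableSpace.comap (Z i0) inferInstance := by
    rintro _ ⟨t, ht, rfl⟩
    refine ⟨Prod.fst ⁻¹' t, measurable_fst ht, ?_⟩
    rw [hZ]
    rfl
  -- auxiliary variable W
  set W : Ω → Ξ × ({j : Fin s // j ≠ i0} → E × ℝ) :=
    (fun ω => (ξ ω, fun j : {j : Fin s // j ≠ i0} => Z (j : Fin s) ω)) with hWdef
  have hWmeas : Measurable W := hξmeas.prodMk (measurable_pi_lambda _ fun j => hZmeas _)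
  have hAindep : IndepFun (Z i0) W μ :=
    honesty_indep_aux μ Z hZmeas hindep ξ hξmeas hξindep i0
  haveI : IsProbabilityMeasure (μ.map W) := Measure.isProbabilityMeasure_map hWmeas.aemeasurable
  -- pointwise identifications
  have hXupW : ∀ ω, honXup i0 (X i0 ω) (W ω) = fun j => X j ω := by
    intro ω
    funext j
    by_cases h : j = i0
    · subst h; simp [honXup]
    · simp [honXup, dif_neg h, hWdef, hzall]
  have hQW : ∀ ω, honQ σf i0 (X i0 ω) (W ω) = trunc (St i0 ω) := by
    intro ω
    unfold honQ
    rw [hXupW ω, hSt]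
  have hFW : ∀ ω, honF σf i0 (X i0 ω) (Y i0 ω) (W ω) = ∑ i, trunc (St i ω) * Y i ω := by
    intro ω
    unfold honF
    rw [hXupW ω]
    refine Finset.sum_congr rfl fun i _ => ?_
    congr 1
    · rw [hSt]
    · by_cases h : i = i0
      · subst h
        rw [dif_pos rfl]
      · rw [dif_neg h]
        show (Z i ω).2 = Y i ω
        rw [hzall]
  -- integrability of T'
  have hT'int : Integrable (fun ω => ∑ i, trunc (St i ω) * Y i ω) μ := by
    apply integrable_finset_sum
    intro i _
    exact (hYint i).bdd_mul (c := 1) (measurable_trunc.comp (hStmeas i)).aestronglyMeasurable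
      (Filter.Eventually.of_forall fun ω => by simpa [Real.norm_eq_abs] using abs_trunc_le (St i ω))
  have hTT' : T =ᵐ[μ] fun ω => ∑ i, trunc (St i ω) * Y i ω := by
    have hball : ∀ᵐ ω ∂μ, ∀ i, |St i ω| ≤ 1 := (ae_all_iff).mpr hSbd
    filter_upwards [hball] with ω hb
    rw [hT]
    exact (Finset.sum_congr rfl fun i _ => by rw [trunc_eq (hb i)]).symm
  have hFVW : (fun ω => honF σf i0 (Z i0 ω).1 (Z i0 ω).2 (W ω))
      = fun ω => ∑ i, trunc (St i ω) * Y i ω := by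
    funext ω
    rw [hzall i0 ω]
    exact hFW ω
  have hT'int' : Integrable (fun ω => honF σf i0 (Z i0 ω).1 (Z i0 ω).2 (W ω)) μ := by
    rw [hFVW]; exact hT'int
  -- first freezing: conditional expectation given Z i0
  have hfreeze1 := condexp_freeze μ (Z i0) W (hZmeas i0) hWmeas hAindep
    (fun p => honF σf i0 p.1.1 p.1.2 p.2) (measurable_honF σf i0 hσfmeas) hT'int'
  -- the marginal functions
  set ν := μ.map W with hν
  set gq : E → ℝ := fun x => ∫ w, honQ σf i0 x w ∂ν with hgq
  set gH : E → ℝ := fun x => ∫ w, honH σf i0 x w ∂ν with hgH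
  -- integrability under ν
  have hYνint : ∀ (j : Fin s) (h : j ≠ i0),
      Integrable (fun w : Ξ × ({j : Fin s // j ≠ i0} → E × ℝ) => (w.2 ⟨j, h⟩).2) ν := by
    intro j h
    have hmeas : Measurable (fun w : Ξ × ({j : Fin s // j ≠ i0} → E × ℝ) => (w.2 ⟨j, h⟩).2) :=
      measurable_snd.comp ((measurable_pi_apply _).comp measurable_snd)
    rw [hν]
    rw [integrable_map_measure hmeas.aestronglyMeasurable hWmeas.aemeasurable]
    have : ((fun w : Ξ × ({j : Fin s // j ≠ i0} → E × ℝ) => (w.2 ⟨j, h⟩).2) ∘ W)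
        = fun ω => (Z j ω).2 := rfl
    rw [this]
    exact (hYint j).congr (Filter.Eventually.of_forall fun ω => by simp [hzall j ω])
  have hbndint : Integrable
      (fun w : Ξ × ({j : Fin s // j ≠ i0} → E × ℝ) =>
        ∑ i, |if h : i = i0 then (0:ℝ) else (w.2 ⟨i, h⟩).2|) ν := by
    apply integrable_finset_sum
    intro i _
    by_cases h : i = i0
    · simp only [dif_pos h, abs_zero]
      exact integrable_const 0
    · simp only [dif_neg h]
      exact (hYνint i h).abs
  have hHmeas : ∀ x : E, Measurable (fun w => honH σf i0 x w) :=
    fun x => (measurable_honH σf i0 hσfmeas).comp (measurable_const.prodMk measurable_id)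
  have hQmeas : ∀ x : E, Measurable (fun w => honQ σf i0 x w) :=
    fun x => (measurable_honQ σf i0 (hσfmeas i0)).comp (measurable_const.prodMk measurable_id)
  have hHint : ∀ x : E, Integrable (fun w => honH σf i0 x w) ν := by
    intro x
    refine hbndint.mono' (hHmeas x).aestronglyMeasurable ?_
    exact Filter.Eventually.of_forall fun w => by
      simpa [Real.norm_eq_abs] using abs_honH_le σf i0 x w
  have hQint : ∀ x : E, Integrable (fun w => honQ σf i0 x w) ν := by
    intro x
    refine (integrable_const (1:ℝ)).mono' (hQmeas x).aestronglyMeasurable ?_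
    exact Filter.Eventually.of_forall fun w => by
      simpa [Real.norm_eq_abs] using abs_honQ_le σf i0 x w
  -- splitting the frozen integral
  have hGsplit : ∀ (x : E) (y : ℝ),
      ∫ w, honF σf i0 x y w ∂ν = gq x * y + gH x := by
    intro x y
    have heq : (fun w => honF σf i0 x y w)
        = fun w => honQ σf i0 x w * y + honH σf i0 x w := by
      funext w
      exact honF_split σf i0 x y w
    rw [heq, integral_add ((hQint x).mul_const y) (hHint x), integral_mul_const, hgq, hgH]
  -- conditional expectation given Z i0, in final form
  have hcondZ : (μ[T | MeasurableSpace.comap (Z i0) inferInstance])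
      =ᵐ[μ] (fun ω => gq (X i0 ω)) * Y i0 + fun ω => gH (X i0 ω) := by
    refine (condExp_congr_ae hTT').trans ?_
    rw [← hFVW]
    refine hfreeze1.trans (Filter.Eventually.of_forall fun ω => ?_)
    show ∫ w, honF σf i0 (Z i0 ω).1 (Z i0 ω).2 w ∂ν = gq (X i0 ω) * Y i0 ω + gH (X i0 ω)
    rw [hzall i0 ω]
    exact hGsplit (X i0 ω) (Y i0 ω)
  -- strong measurability of gq, gH composed with X i0
  have hgqsm : StronglyMeasurable gq := by
    rw [hgq, hν]
    exact (measurable_honQ σf i0 (hσfmeas i0)).stronglyMeasurable.integral_prod_right'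
  have hgHsm : StronglyMeasurable gH := by
    rw [hgH, hν]
    exact (measurable_honH σf i0 hσfmeas).stronglyMeasurable.integral_prod_right'
  have hXcm : Measurable[MeasurableSpace.comap (X i0) inferInstance] (X i0) :=
    fun t ht => ⟨t, ht, rfl⟩
  have hgqXsm : StronglyMeasurable[MeasurableSpace.comap (X i0) inferInstance]
      (fun ω => gq (X i0 ω)) := (hgqsm.measurable.comp hXcm).stronglyMeasurable
  have hgHXsm : StronglyMeasurable[MeasurableSpace.comap (X i0) inferInstance]
      (fun ω => gH (X i0 ω)) := (hgHsm.measurable.comp hXcm).stronglyMeasurable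
  -- bounds
  have hgqbd : ∀ x, |gq x| ≤ 1 := by
    intro x
    rw [hgq]
    have := norm_integral_le_of_norm_le_const (μ := ν)
      (f := fun w => honQ σf i0 x w) (C := 1)
      (Filter.Eventually.of_forall fun w => by
        simpa [Real.norm_eq_abs] using abs_honQ_le σf i0 x w)
    simpa [Real.norm_eq_abs, measure_univ] using this
  have hgHbd : ∀ x, |gH x| ≤ ∫ w, (∑ i, |if h : i = i0 then (0:ℝ) else (w.2 ⟨i, h⟩).2|) ∂ν := by
    intro x
    rw [hgH]
    calc |∫ w, honH σf i0 x w ∂ν| ≤ ∫ w, |honH σf i0 x w| ∂ν := by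
          simpa [Real.norm_eq_abs] using
            norm_integral_le_integral_norm (μ := ν) (fun w => honH σf i0 x w)
      _ ≤ _ := integral_mono (hHint x).abs hbndint
          (fun w => abs_honH_le σf i0 x w)
  -- integrability of the composed functions
  have hgHXint : Integrable (fun ω => gH (X i0 ω)) μ := by
    refine (integrable_const
      (∫ w, (∑ i, |if h : i = i0 then (0:ℝ) else (w.2 ⟨i, h⟩).2|) ∂ν)).mono'
      (hgHsm.measurable.comp (hXmeas i0)).aestronglyMeasurable ?_
    exact Filter.Eventually.of_forall fun ω => by
      simpa [Real.norm_eq_abs] using hgHbd (X i0 ω)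
  have hgqYint : Integrable ((fun ω => gq (X i0 ω)) * Y i0) μ :=
    (hYint i0).bdd_mul (c := 1) (hgqsm.measurable.comp (hXmeas i0)).aestronglyMeasurable
      (Filter.Eventually.of_forall fun ω => by simpa [Real.norm_eq_abs] using hgqbd (X i0 ω))
  -- conditional expectation given X i0
  have hcondX : (μ[T | MeasurableSpace.comap (X i0) inferInstance])
      =ᵐ[μ] (fun ω => gq (X i0 ω)) * μ[Y i0 | MeasurableSpace.comap (X i0) inferInstance]
        + fun ω => gH (X i0 ω) := by
    refine ((condExp_condExp_of_le hmXZ hmZle).symm).trans ?_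
    refine (condExp_congr_ae hcondZ).trans ?_
    have hadd := condExp_add (μ := μ) (m := MeasurableSpace.comap (X i0) inferInstance)
      (f := (fun ω => gq (X i0 ω)) * Y i0) (g := fun ω => gH (X i0 ω)) hgqYint hgHXint
    refine hadd.trans ?_
    have hpull := condExp_mul_of_stronglyMeasurable_left hgqXsm hgqYint (hYint i0)
    have hcH : μ[(fun ω => gH (X i0 ω)) | MeasurableSpace.comap (X i0) inferInstance]
        = fun ω => gH (X i0 ω) :=
      condExp_of_stronglyMeasurable hmXle hgHXsm hgHXint
    filter_upwards [hpull] with ω h1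
    rw [Pi.add_apply, Pi.add_apply, h1, hcH]
  -- conditional expectation of the weight
  have hSt0 : St i0 =ᵐ[μ] fun ω => honQ σf i0 (X i0 ω) (W ω) := by
    filter_upwards [hSbd i0] with ω hb
    rw [hQW ω, trunc_eq hb]
  have hXWindep : IndepFun (X i0) W μ := by
    have hcomp := hAindep.comp measurable_fst measurable_id
    have hfx : (Prod.fst ∘ Z i0) = X i0 := by
      funext ω
      rw [hZ]
      rfl
    rwa [hfx] at hcomp
  have hQVWint : Integrable (fun ω => honQ σf i0 (X i0 ω) (W ω)) μ := by
    refine (integrable_const (1:ℝ)).mono'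
      ((measurable_honQ σf i0 (hσfmeas i0)).comp
        ((hXmeas i0).prodMk hWmeas)).aestronglyMeasurable ?_
    exact Filter.Eventually.of_forall fun ω => by
      simpa [Real.norm_eq_abs] using abs_honQ_le σf i0 (X i0 ω) (W ω)
  have hfreeze2 := condexp_freeze μ (X i0) W (hXmeas i0) hWmeas hXWindep
    (fun p => honQ σf i0 p.1 p.2) (measurable_honQ σf i0 (hσfmeas i0)) hQVWint
  have hcondSt : (μ[St i0 | MeasurableSpace.comap (X i0) inferInstance])
      =ᵐ[μ] fun ω => gq (X i0 ω) := by
    refine (condExp_congr_ae hSt0).trans ?_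
    exact hfreeze2
  -- final assembly
  filter_upwards [hcondZ, hcondX, hcondSt] with ω h1 h2 h3
  rw [h1, h2, h3]
  simp only [Pi.add_apply, Pi.mul_apply]
  ring
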